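/- Let G be an abelian, connected regular Lie group with Lie algebra 𝔤. Then there is an open neighborhood V of 0 in 𝔤 such that exp(V) is open in G and exp restricted to V is a diffeomorphism onto exp(V); moreover exp induces an isomorphism of Lie groups 𝔤 / ker(exp) ≅ G. -/

import Mathlib

open scoped Manifold

/-- Let `G` be an abelian, connected regular Lie group with Lie algebra `𝔤`
(here a Banach Lie group modeled on `E = 𝔤`) with exponential map `exp : 𝔤 → G`, a surjective
smooth group homomorphism (regularity).  Then there is an open neighborhood `V` of `0` in `𝔤`
such that `exp '' V` is open in `G` and `exp` restricted to `V` is a diffeomorphism onto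
`exp '' V`; moreover `exp` induces an isomorphism of (topological) groups `𝔤 ⧸ ker exp ≃ G`. -/
theorem abelian_connected_exp_local_diffeo_and_quotient_iso
    {E : Type*} [NormedAddCommGroup E] [NormedSpace ℝ E] [CompleteSpace E]
    {G : Type*} [TopologicalSpace G] [ChartedSpace E G] [CommGroup G]
    [LieGroup 𝓘(ℝ, E) (⊤ : ℕ∞) G] [ConnectedSpace G]
    (exp : E → G)
    (hexp_smooth : ContMDiff 𝓘(ℝ, E) 𝓘(ℝ, E) (⊤ : ℕ∞) exp)
    (hexp_hom : ∀ x y : E, exp (x + y) = exp x * exp y)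
    (hexp_surj : Function.Surjective exp)
    (hexp_deriv : ∀ v : E, mfderiv 𝓘(ℝ, E) 𝓘(ℝ, E) exp 0 v = v)
    -- the kernel of `exp` as an additive subgroup of `𝔤`:
    (K : AddSubgroup E) (hK : ∀ x : E, x ∈ K ↔ exp x = 1) :
    (∃ V : Set E, IsOpen V ∧ (0 : E) ∈ V ∧ IsOpen (exp '' V) ∧ Set.InjOn exp V ∧
      ∃ ψ : G → E, ContMDiffOn 𝓘(ℝ, E) 𝓘(ℝ, E) (⊤ : ℕ∞) ψ (exp '' V) ∧
        ∀ x ∈ V, ψ (exp x) = x) ∧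
    ∃ φ : (E ⧸ K) ≃ₜ G,
      (∀ x : E, φ (QuotientAddGroup.mk x) = exp x) ∧
      ∀ a b : E ⧸ K, φ (a + b) = φ a * φ b := by
  classical
  have h1 : exp 0 = 1 := by
    have h := hexp_hom 0 0
    rw [add_zero] at h
    exact (mul_left_cancel (a := exp 0) (by rw [mul_one, ← h])).symm
  set c := extChartAt 𝓘(ℝ, E) (1 : G) with hc
  set f : E → E := fun x => c (exp x) with hfdef
  have hexp0_mem : exp 0 ∈ (chartAt E (1 : G)).source := by
    rw [h1]; exact mem_chart_source _ _
  have hsrc : exp 0 ∈ c.source := by rw [hc, extChartAt_source]; exact hexp0_mem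
  have h_id : mfderiv 𝓘(ℝ, E) 𝓘(ℝ, E) exp 0 = ContinuousLinearMap.id ℝ E :=
    ContinuousLinearMap.ext hexp_deriv
  have hexp_mfd : HasMFDerivAt 𝓘(ℝ, E) 𝓘(ℝ, E) exp 0 (ContinuousLinearMap.id ℝ E) :=
    h_id ▸ ((hexp_smooth 0).mdifferentiableAt (by simp)).hasMFDerivAt
  set A := mfderiv 𝓘(ℝ, E) 𝓘(ℝ, E) (chartAt E (1 : G)) (exp 0) with hA
  set B := mfderivWithin 𝓘(ℝ, E) 𝓘(ℝ, E) c.symm (Set.range (𝓘(ℝ, E))) (c (exp 0)) with hB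
  have hAB : A.comp B = ContinuousLinearMap.id ℝ E := by
    have h := mfderiv_extChartAt_comp_mfderivWithin_extChartAt_symm' (I := 𝓘(ℝ, E)) hsrc
    rwa [(hasMFDerivAt_extChartAt hexp0_mem).mfderiv] at h
  have hBA : B.comp A = ContinuousLinearMap.id ℝ E := by
    have htgt : c (exp 0) ∈ c.target := c.map_source hsrc
    have h := mfderivWithin_extChartAt_symm_comp_mfderiv_extChartAt (I := 𝓘(ℝ, E)) htgt
    rw [c.left_inv hsrc] at h
    rwa [(hasMFDerivAt_extChartAt hexp0_mem).mfderiv] at h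
  set e' : E ≃L[ℝ] E := ContinuousLinearEquiv.equivOfInverse A B
    (fun v => congrFun (congrArg DFunLike.coe hBA) v)
    (fun v => congrFun (congrArg DFunLike.coe hAB) v) with he'
  have hf_mfd : HasMFDerivAt 𝓘(ℝ, E) 𝓘(ℝ, E) f 0
      (A.comp (ContinuousLinearMap.id ℝ E)) :=
    HasMFDerivAt.comp 0 (hasMFDerivAt_extChartAt hexp0_mem) hexp_mfd
  have hf' : HasFDerivAt f (e' : E →L[ℝ] E) 0 := by
    have h := hasMFDerivAt_iff_hasFDerivAt.mp hf_mfd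
    have he : (e' : E →L[ℝ] E) = A.comp (ContinuousLinearMap.id ℝ E) := by ext v; rfl
    rw [he]; exact h
  have hfc : ContDiffAt ℝ ((⊤ : ℕ∞) : WithTop ℕ∞) f 0 := by
    have : ContMDiffAt 𝓘(ℝ, E) 𝓘(ℝ, E) (⊤ : ℕ∞) f 0 :=
      (contMDiffAt_extChartAt' hexp0_mem).comp 0 (hexp_smooth 0)
    exact this.contDiffAt
  have hn : ((⊤ : ℕ∞) : WithTop ℕ∞) ≠ 0 := by simp
  set pl := hfc.toOpenPartialHomeomorph f hf' hn with hpl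
  have h0pl : (0 : E) ∈ pl.source := hfc.mem_toOpenPartialHomeomorph_source hf' hn
  have hplcoe : (pl : E → E) = f := hfc.toOpenPartialHomeomorph_coe hf' hn
  have hsymm_cd : ContDiffAt ℝ ((⊤ : ℕ∞) : WithTop ℕ∞) pl.symm (f 0) :=
    hfc.to_localInverse hf' hn
  -- choice of V
  have hO : IsOpen (pl.source ∩ exp ⁻¹' (chartAt E (1 : G)).source) :=
    pl.open_source.inter ((chartAt E (1 : G)).open_source.preimage hexp_smooth.continuous)
  obtain ⟨ε, hε, hball⟩ := Metric.isOpen_iff.mp hO 0 ⟨h0pl, hexp0_mem⟩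
  set V := Metric.ball (0 : E) (ε / 2) with hV
  have hVO : ∀ x ∈ V, x ∈ pl.source ∩ exp ⁻¹' (chartAt E (1 : G)).source := by
    intro x hx
    refine hball ?_
    rw [Metric.mem_ball, dist_zero_right] at hx ⊢
    linarith
  have hdiff : ∀ x ∈ V, ∀ y ∈ V, y - x ∈ pl.source := by
    intro x hx y hy
    refine (hball ?_).1
    rw [Metric.mem_ball, dist_zero_right] at hx hy ⊢
    calc ‖y - x‖ ≤ ‖y‖ + ‖x‖ := norm_sub_le y x
      _ < ε := by linarith
  have hinj : Set.InjOn exp V := by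
    intro x hx y hy hxy
    refine pl.injOn (hVO x hx).1 (hVO y hy).1 ?_
    rw [hplcoe]
    show c (exp x) = c (exp y)
    rw [hxy]
  have hcchart : ∀ g : G, c g = chartAt E (1 : G) g := fun g => rfl
  have himg : exp '' V = (chartAt E (1 : G)).symm '' (pl '' V) := by
    rw [Set.image_image, hplcoe]
    exact Set.image_congr fun x hx => ((chartAt E (1 : G)).left_inv (hVO x hx).2).symm
  have hopenV : IsOpen (exp '' V) := by
    rw [himg]
    refine ((chartAt E (1 : G)).symm).isOpen_image_of_subset_source ?_ ?_
    · exact pl.isOpen_image_of_subset_source Metric.isOpen_ball fun x hx => (hVO x hx).1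
    · rintro _ ⟨x, hx, rfl⟩
      rw [hplcoe]
      exact (chartAt E (1 : G)).map_source (hVO x hx).2
  set ψG : G → E := Function.invFunOn exp V with hψG
  have hψeq : ∀ x ∈ V, ψG (exp x) = x := fun x hx => hinj.leftInvOn_invFunOn hx
  have hψ_smooth : ContMDiffOn 𝓘(ℝ, E) 𝓘(ℝ, E) (⊤ : ℕ∞) ψG (exp '' V) := by
    rintro h ⟨x, hx, rfl⟩
    set θ : G → E := fun h => x + pl.symm (c (h * (exp x)⁻¹)) with hθdef
    have hθ : ContMDiffAt 𝓘(ℝ, E) 𝓘(ℝ, E) (⊤ : ℕ∞) θ (exp x) := by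
      have hmul : ContMDiffAt 𝓘(ℝ, E) 𝓘(ℝ, E) (⊤ : ℕ∞) (fun h : G => h * (exp x)⁻¹) (exp x) :=
        (contMDiff_id.mul contMDiff_const) (exp x)
      have hmulval : exp x * (exp x)⁻¹ = 1 := mul_inv_cancel _
      have hchart : ContMDiffAt 𝓘(ℝ, E) 𝓘(ℝ, E) (⊤ : ℕ∞) (c : G → E) (exp x * (exp x)⁻¹) := by
        rw [hmulval]; exact contMDiffAt_extChartAt
      have hsy : ContMDiffAt 𝓘(ℝ, E) 𝓘(ℝ, E) (⊤ : ℕ∞) pl.symm (c (exp x * (exp x)⁻¹)) := by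
        rw [hmulval]
        have hcf : c (1 : G) = f 0 := by show c 1 = c (exp 0); rw [h1]
        rw [hcf]
        exact hsymm_cd.contMDiffAt
      exact contMDiffAt_const.add (hsy.comp (exp x) (hchart.comp (exp x) hmul))
    have hkey : ∀ y ∈ V, ψG (exp y) = θ (exp y) := by
      intro y hy
      have hxy : exp y * (exp x)⁻¹ = exp (y - x) := by
        rw [mul_inv_eq_iff_eq_mul, ← hexp_hom, sub_add_cancel]
      have hmem := hdiff x hx y hy
      have hval : pl.symm (c (exp (y - x))) = y - x := by
        have hpc : c (exp (y - x)) = pl (y - x) := by rw [hplcoe]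
        rw [hpc]; exact pl.left_inv hmem
      rw [hψeq y hy]
      show y = x + pl.symm (c (exp y * (exp x)⁻¹))
      rw [hxy, hval, add_sub_cancel]
    refine (hθ.contMDiffWithinAt).congr ?_ (hkey x hx)
    rintro _ ⟨y, hy, rfl⟩
    exact hkey y hy
  have h0V : (0 : E) ∈ V := Metric.mem_ball_self (by positivity)
  -- openness of exp
  have hopen_sub : ∀ S : Set E, IsOpen S → S ⊆ V → IsOpen (exp '' S) := by
    intro S hS hSV
    have heq : exp '' S = (exp '' V) ∩ ψG ⁻¹' S := by
      ext h; constructor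
      · rintro ⟨s, hs, rfl⟩
        exact ⟨⟨s, hSV hs, rfl⟩, by rw [Set.mem_preimage, hψeq s (hSV hs)]; exact hs⟩
      · rintro ⟨⟨y, hy, rfl⟩, hmem⟩
        rw [Set.mem_preimage, hψeq y hy] at hmem
        exact ⟨y, hmem, rfl⟩
    rw [heq]
    exact hψ_smooth.continuousOn.isOpen_inter_preimage hopenV hS
  haveI : ContinuousMul G := continuousMul_of_contMDiffMul 𝓘(ℝ, E) ((⊤ : ℕ∞) : WithTop ℕ∞)
  have hexp_open : IsOpenMap exp := by
    intro U hU
    have heq : exp '' U = ⋃ u ∈ U, (· * exp u) '' (exp '' (V ∩ (· + u) ⁻¹' U)) := by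
      ext h
      simp only [Set.mem_iUnion, Set.mem_image, Set.mem_inter_iff, Set.mem_preimage]
      constructor
      · rintro ⟨u, hu, rfl⟩
        exact ⟨u, hu, exp 0, ⟨0, ⟨h0V, by simpa using hu⟩, rfl⟩, by
          rw [← hexp_hom, zero_add]⟩
      · rintro ⟨u, _, _, ⟨z, ⟨hzV, hzU⟩, rfl⟩, rfl⟩
        exact ⟨z + u, hzU, hexp_hom z u⟩
    rw [heq]
    refine isOpen_biUnion fun u _ => ?_
    exact (Homeomorph.mulRight (exp u)).isOpenMap _
      (hopen_sub _ (Metric.isOpen_ball.inter (hU.preimage (continuous_id.add continuous_const)))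
        Set.inter_subset_left)
  -- the quotient isomorphism
  have hrel : ∀ a b : E, -a + b ∈ K → exp a = exp b := by
    intro a b hab
    have h := hexp_hom a (-a + b)
    rw [(hK _).mp hab, mul_one, add_neg_cancel_left] at h
    exact h.symm
  set φ0 : E ⧸ K → G := fun q =>
    Quotient.liftOn' q exp (fun a b h => hrel a b (QuotientAddGroup.leftRel_apply.mp h))
    with hφ0
  have hφ0mk : ∀ x : E, φ0 (QuotientAddGroup.mk x) = exp x := fun x => rfl
  have hexpinv : ∀ x : E, exp (-x) = (exp x)⁻¹ := by
    intro x
    refine eq_inv_of_mul_eq_one_left ?_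
    rw [← hexp_hom, neg_add_cancel, h1]
  have hbij : Function.Bijective φ0 := by
    constructor
    · intro a b
      refine Quotient.inductionOn₂' a b fun x y hxy => ?_
      have hxy' : exp x = exp y := hxy
      have hmem : -x + y ∈ K := by
        rw [hK, hexp_hom, hexpinv, ← hxy', inv_mul_cancel]
      exact Quotient.sound' (QuotientAddGroup.leftRel_apply.mpr hmem)
    · intro g
      obtain ⟨x, rfl⟩ := hexp_surj g
      exact ⟨QuotientAddGroup.mk x, rfl⟩
  have hmk_cont : Continuous (QuotientAddGroup.mk : E → E ⧸ K) :=
    QuotientAddGroup.isOpenQuotientMap_mk.continuous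
  have hcont : Continuous φ0 := by
    rw [QuotientAddGroup.isOpenQuotientMap_mk.isQuotientMap.continuous_iff]
    exact hexp_smooth.continuous
  have hopenφ : IsOpenMap φ0 := by
    intro U hU
    have himgU : φ0 '' U = exp '' (QuotientAddGroup.mk ⁻¹' U : Set E) := by
      conv_lhs => rw [← Set.image_preimage_eq U QuotientAddGroup.isOpenQuotientMap_mk.surjective]
      rw [← Set.image_comp]
      rfl
    rw [himgU]
    exact hexp_open _ (hU.preimage hmk_cont)
  refine ⟨⟨V, Metric.isOpen_ball, h0V, hopenV, hinj, ψG, hψ_smooth, hψeq⟩, ?_⟩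
  refine ⟨Equiv.toHomeomorphOfContinuousOpen (Equiv.ofBijective φ0 hbij) hcont hopenφ,
    fun x => rfl, ?_⟩
  intro a b
  refine Quotient.inductionOn₂' a b fun x y => ?_
  show φ0 (QuotientAddGroup.mk x + QuotientAddGroup.mk y)
    = φ0 (QuotientAddGroup.mk x) * φ0 (QuotientAddGroup.mk y)
  rw [← QuotientAddGroup.mk_add, hφ0mk, hφ0mk, hφ0mk]
  exact hexp_hom x y
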